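/- Let P^f ∈ ℝ^{d×d} and P^a ∈ ℝ^{d×d} be symmetric positive definite. Then the matrix A = (P^a)^{1/2} [ (P^a)^{1/2} P^f (P^a)^{1/2} ]^{-1/2} (P^a)^{1/2} is symmetric positive definite and satisfies A P^f A^T = P^a. -/

import Mathlib

open Matrix
open scoped ComplexOrder

/-- The positive semidefinite square root of a positive semidefinite matrix
(the definition `Matrix.PosSemidef.sqrt` of the older Mathlib, since removed). -/
noncomputable def Matrix.PosSemidef.sqrt {n 𝕜 : Type*} [Fintype n] [DecidableEq n] [RCLike 𝕜]
    {A : Matrix n n 𝕜} (hA : A.PosSemidef) : Matrix n n 𝕜 :=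
  hA.1.eigenvectorUnitary.1 * diagonal ((↑) ∘ (√·) ∘ hA.1.eigenvalues) *
    (star hA.1.eigenvectorUnitary : Matrix n n 𝕜)
set_option maxHeartbeats 1000000

lemma Matrix.PosSemidef.sqrt_mul_self {n 𝕜 : Type*} [Fintype n] [DecidableEq n] [RCLike 𝕜]
    {A : Matrix n n 𝕜} (hA : A.PosSemidef) : hA.sqrt * hA.sqrt = A := by
  have hU : (star hA.1.eigenvectorUnitary : Matrix n n 𝕜) * hA.1.eigenvectorUnitary = 1 :=
    Unitary.coe_star_mul_self _
  have hD : diagonal ((↑) ∘ (√·) ∘ hA.1.eigenvalues : n → 𝕜) *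
      diagonal ((↑) ∘ (√·) ∘ hA.1.eigenvalues) = diagonal (RCLike.ofReal ∘ hA.1.eigenvalues) := by
    rw [diagonal_mul_diagonal]
    congr 1
    funext i
    simp only [Function.comp]
    rw [← RCLike.ofReal_mul, Real.mul_self_sqrt (hA.eigenvalues_nonneg i)]
  conv_rhs => rw [hA.1.spectral_theorem, Unitary.conjStarAlgAut_apply]
  unfold Matrix.PosSemidef.sqrt
  rw [← hD]
  rw [show ∀ a b c e f g : Matrix n n 𝕜, a * b * c * (e * f * g) = a * b * (c * e) * f * g from
    fun _ _ _ _ _ _ => by simp only [Matrix.mul_assoc], hU, Matrix.mul_one]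
  simp only [Matrix.mul_assoc]

lemma Matrix.PosSemidef.posSemidef_sqrt {n 𝕜 : Type*} [Fintype n] [DecidableEq n] [RCLike 𝕜]
    {A : Matrix n n 𝕜} (hA : A.PosSemidef) : hA.sqrt.PosSemidef := by
  have hd : (diagonal ((↑) ∘ (√·) ∘ hA.1.eigenvalues : n → 𝕜)).PosSemidef :=
    posSemidef_diagonal_iff.mpr fun i => RCLike.ofReal_nonneg.mpr (Real.sqrt_nonneg _)
  have := hd.mul_mul_conjTranspose_same (hA.1.eigenvectorUnitary : Matrix n n 𝕜)
  rwa [← star_eq_conjTranspose] at this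

private lemma conj_posDef {d : ℕ} {M N : Matrix (Fin d) (Fin d) ℝ}
    (hM : M.PosDef) (hN : IsUnit N) : (Nᴴ * M * N).PosDef := by
  exact hM.conjTranspose_mul_mul_same (Matrix.mulVec_injective_iff_isUnit.mpr hN)

private lemma posDef_of_posSemidef_isUnit {d : ℕ} {S : Matrix (Fin d) (Fin d) ℝ}
    (hS : S.PosSemidef) (hu : IsUnit S.det) : S.PosDef := by
  have hT : hS.sqrt * hS.sqrt = S := hS.sqrt_mul_self
  have hTu : IsUnit hS.sqrt := by
    rw [Matrix.isUnit_iff_isUnit_det]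
    have : hS.sqrt.det * hS.sqrt.det = S.det := by rw [← det_mul, hT]
    exact isUnit_of_mul_isUnit_left (this ▸ hu)
  have := conj_posDef Matrix.PosDef.one hTu
  rwa [Matrix.mul_one, hS.posSemidef_sqrt.isHermitian.eq, hT] at this

/-- The optimal transport map between `N(0, P^f)` and `N(0, P^a)`:
`A = (P^a)^{1/2} [(P^a)^{1/2} P^f (P^a)^{1/2}]^{-1/2} (P^a)^{1/2}` is symmetric
positive definite and satisfies `A P^f Aᵀ = P^a`. -/
theorem optimal_gaussian_transport_matrix
    {d : ℕ} (Pf Pa : Matrix (Fin d) (Fin d) ℝ)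
    (hPf : Pf.PosDef) (hPa : Pa.PosDef)
    (B : Matrix (Fin d) (Fin d) ℝ)
    (hB : B = hPa.posSemidef.sqrt * Pf * hPa.posSemidef.sqrt)
    (hBpd : B.PosDef)
    (A : Matrix (Fin d) (Fin d) ℝ)
    (hA : A = hPa.posSemidef.sqrt * (hBpd.posSemidef.sqrt)⁻¹ * hPa.posSemidef.sqrt) :
    A.PosDef ∧ A * Pf * Aᵀ = Pa := by
  set S := hPa.posSemidef.sqrt with hSdef
  set C := hBpd.posSemidef.sqrt with hCdef
  have hSS : S * S = Pa := hPa.posSemidef.sqrt_mul_self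
  have hCC : C * C = B := hBpd.posSemidef.sqrt_mul_self
  -- S is positive definite
  have hSpd : S.PosDef := by
    refine posDef_of_posSemidef_isUnit hPa.posSemidef.posSemidef_sqrt ?_
    have : S.det * S.det = Pa.det := by rw [← det_mul, hSS]
    exact isUnit_of_mul_isUnit_left (this ▸ hPa.det_pos.ne'.isUnit)
  have hCpd : C.PosDef := by
    refine posDef_of_posSemidef_isUnit hBpd.posSemidef.posSemidef_sqrt ?_
    have : C.det * C.det = B.det := by rw [← det_mul, hCC]
    exact isUnit_of_mul_isUnit_left (this ▸ hBpd.det_pos.ne'.isUnit)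
  have hCinv : C⁻¹.PosDef := hCpd.inv
  have hSH : Sᴴ = S := hSpd.isHermitian.eq
  have hApd : A.PosDef := by
    have h := conj_posDef hCinv hSpd.isUnit
    rwa [hSH, ← hA] at h
  have hAT : Aᵀ = A := by
    have := hApd.isHermitian.eq
    rwa [conjTranspose_eq_transpose_of_trivial] at this
  refine ⟨hApd, ?_⟩
  have hCu := hCpd.isUnit
  have hCiC : C⁻¹ * C = 1 := nonsing_inv_mul C (isUnit_iff_isUnit_det C |>.1 hCu)
  have hCCi : C * C⁻¹ = 1 := mul_nonsing_inv C (isUnit_iff_isUnit_det C |>.1 hCu)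
  rw [hAT, hA]
  calc S * C⁻¹ * S * Pf * (S * C⁻¹ * S)
      = S * C⁻¹ * (S * Pf * S) * C⁻¹ * S := by noncomm_ring
    _ = S * C⁻¹ * (C * C) * C⁻¹ * S := by rw [← hB, hCC]
    _ = S * (C⁻¹ * C) * (C * C⁻¹) * S := by noncomm_ring
    _ = S * S := by rw [hCiC, hCCi, Matrix.mul_one, Matrix.mul_one]
    _ = Pa := hSS
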